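/- If F̄_min < F < F̄_max, then there exists a unique x* ∈ (0,1) with Q̄(x*) = 0; moreover Q̄(x) < 0 for all x ∈ (0, x*) and Q̄(x) > 0 for all x ∈ (x*, 1), so that for the replicator dynamics ẋ = x(1−x)Q̄(x) of the bribery game the interior equilibrium x* is unstable and both boundary states x = 0 and x = 1 are attracting (bistability). -/

import Mathlib

set_option maxHeartbeats 1000000


/-- The bribery-game gradient function Q̄. -/
noncomputable def Qbar (N : ℕ) (c τ β rp α F h γ p q : ℝ) (x : ℝ) : ℝ :=
  F * c / N - c - 2 * α * β * τ * rp + β * τ * rp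
    + ((N : ℝ) - 1) / N * γ * h * (q - p)
    - α * β * τ * rp * (∑ k ∈ Finset.range (N - 1), (1 - x) ^ (k + 1))
    + (1 - α) * β * τ * rp * (∑ k ∈ Finset.range (N - 1), x ^ (k + 1))

/-- The lower threshold F̄_min for the pool multiplier in the bribery game. -/
noncomputable def Fbarmin (N : ℕ) (c τ β rp α h γ p q : ℝ) : ℝ :=
  (N * c - ((N : ℝ) - 1) * γ * h * (q - p) - N * β * τ * rp * (1 - 2 * α)
    - N * ((N : ℝ) - 1) * (1 - α) * β * τ * rp) / c

/-- The upper threshold F̄_max for the pool multiplier in the bribery game. -/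
noncomputable def Fbarmax (N : ℕ) (c τ β rp α h γ p q : ℝ) : ℝ :=
  (N * c - ((N : ℝ) - 1) * γ * h * (q - p) - N * β * τ * rp
    + N * α * β * τ * rp * ((N : ℝ) + 1)) / c

lemma sum_pow_strict {n : ℕ} (hn : 1 ≤ n) {x y : ℝ} (hx : 0 ≤ x) (hxy : x < y) :
    ∑ k ∈ Finset.range n, x ^ (k + 1) < ∑ k ∈ Finset.range n, y ^ (k + 1) := by
  apply Finset.sum_lt_sum
  · intro i _; exact pow_le_pow_left₀ hx hxy.le _
  · exact ⟨0, Finset.mem_range.2 hn, by simpa using hxy⟩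

/-- If F̄_min < F < F̄_max then Q̄ has a unique zero x* in (0,1), with Q̄ < 0 on (0,x*)
and Q̄ > 0 on (x*,1): the interior equilibrium x* of the replicator dynamics
ẋ = x(1−x)Q̄(x) of the bribery game is unstable and both boundary states x = 0 and
x = 1 are attracting (bistability). -/
theorem bg_bistability (N : ℕ) (hN : 2 ≤ N) (c τ β rp α F h γ p q : ℝ)
    (hc : 0 < c) (hτ : 0 < τ) (hβ : 0 < β) (hrp : 0 < rp) (hα0 : 0 ≤ α) (hα1 : α ≤ 1)
    (hh : 0 < h) (hγ0 : 0 < γ) (hγ1 : γ ≤ 1) (hp0 : 0 ≤ p) (hp1 : p ≤ 1)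
    (hq0 : 0 ≤ q) (hq1 : q ≤ 1)
    (hFlo : Fbarmin N c τ β rp α h γ p q < F) (hFhi : F < Fbarmax N c τ β rp α h γ p q) :
    ∃ xs : ℝ, 0 < xs ∧ xs < 1 ∧ Qbar N c τ β rp α F h γ p q xs = 0 ∧
      (∀ y : ℝ, 0 < y → y < 1 → Qbar N c τ β rp α F h γ p q y = 0 → y = xs) ∧
      (∀ x : ℝ, 0 < x → x < xs → Qbar N c τ β rp α F h γ p q x < 0) ∧
      (∀ x : ℝ, xs < x → x < 1 → 0 < Qbar N c τ β rp α F h γ p q x) := by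
  set Q : ℝ → ℝ := Qbar N c τ β rp α F h γ p q with hQ
  have hn1 : 1 ≤ N - 1 := by omega
  have hNpos : (0:ℝ) < (N:ℝ) := by positivity
  have hcast : ((N - 1 : ℕ) : ℝ) = (N:ℝ) - 1 := by
    have : 1 ≤ N := by omega
    push_cast [Nat.cast_sub this]; ring
  -- strict monotonicity on [0,1]
  have hmono : StrictMonoOn Q (Set.Icc 0 1) := by
    intro x hx y hy hxy
    have h1x : (0:ℝ) ≤ 1 - y := by linarith [hy.2]
    have h1xy : 1 - y < 1 - x := by linarith
    have hs1 : ∑ k ∈ Finset.range (N - 1), (1 - y) ^ (k + 1)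
        ≤ ∑ k ∈ Finset.range (N - 1), (1 - x) ^ (k + 1) :=
      (sum_pow_strict hn1 h1x h1xy).le
    have hs2 : ∑ k ∈ Finset.range (N - 1), x ^ (k + 1)
        ≤ ∑ k ∈ Finset.range (N - 1), y ^ (k + 1) :=
      (sum_pow_strict hn1 hx.1 hxy).le
    have hB : 0 < β * τ * rp := by positivity
    rcases lt_or_eq_of_le hα1 with hαlt | hαeq
    · have hs2' := sum_pow_strict hn1 hx.1 hxy
      have hc1 : 0 ≤ α * β * τ * rp := by positivity
      have hc2 : 0 < (1 - α) * (β * τ * rp) := by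
        apply mul_pos (by linarith) hB
      simp only [hQ, Qbar]
      nlinarith [mul_le_mul_of_nonneg_left hs1 hc1,
        mul_lt_mul_of_pos_left hs2' hc2]
    · have hs1' := sum_pow_strict hn1 h1x h1xy
      simp only [hQ, Qbar, hαeq, sub_self, zero_mul, add_zero, one_mul]
      nlinarith [mul_lt_mul_of_pos_left hs1' hB]
  -- value at 0
  have hQ0 : Q 0 < 0 := by
    have hF : F * c < (N:ℝ) * c - ((N : ℝ) - 1) * γ * h * (q - p) - N * β * τ * rp
        + N * α * β * τ * rp * ((N : ℝ) + 1) := by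
      rw [Fbarmax, lt_div_iff₀ hc] at hFhi
      linarith
    have hsum0 : ∑ k ∈ Finset.range (N - 1), (0:ℝ) ^ (k + 1) = 0 := by
      simp
    have hsum1 : ∑ k ∈ Finset.range (N - 1), ((1:ℝ) - 0) ^ (k + 1) = (N:ℝ) - 1 := by
      simp [hcast]
    simp only [hQ, Qbar, hsum0, hsum1, mul_zero, add_zero]
    have hNne : (N:ℝ) ≠ 0 := hNpos.ne'
    have hE : F * c / ↑N - c - 2 * α * β * τ * rp + β * τ * rp
        + ((N:ℝ) - 1) / ↑N * γ * h * (q - p) - α * β * τ * rp * ((N:ℝ) - 1)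
        = (F * c - ↑N * c - 2 * α * β * τ * rp * ↑N + β * τ * rp * ↑N
          + ((N:ℝ) - 1) * γ * h * (q - p) - α * β * τ * rp * ((N:ℝ) - 1) * ↑N) / ↑N := by
      field_simp
    rw [hE]
    apply div_neg_of_neg_of_pos _ hNpos
    ring_nf at hF ⊢; linarith
  -- value at 1
  have hQ1 : 0 < Q 1 := by
    have hF : (N:ℝ) * c - ((N : ℝ) - 1) * γ * h * (q - p) - N * β * τ * rp * (1 - 2 * α)
        - N * ((N : ℝ) - 1) * (1 - α) * β * τ * rp < F * c := by
      rw [Fbarmin, div_lt_iff₀ hc] at hFlo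
      linarith
    have hsum0 : ∑ k ∈ Finset.range (N - 1), ((1:ℝ) - 1) ^ (k + 1) = 0 := by
      simp
    have hsum1 : ∑ k ∈ Finset.range (N - 1), (1:ℝ) ^ (k + 1) = (N:ℝ) - 1 := by
      simp [hcast]
    simp only [hQ, Qbar, hsum0, hsum1, mul_zero, sub_zero]
    have hNne : (N:ℝ) ≠ 0 := hNpos.ne'
    have hE : F * c / ↑N - c - 2 * α * β * τ * rp + β * τ * rp
        + ((N:ℝ) - 1) / ↑N * γ * h * (q - p) + (1 - α) * β * τ * rp * ((N:ℝ) - 1)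
        = (F * c - ↑N * c - 2 * α * β * τ * rp * ↑N + β * τ * rp * ↑N
          + ((N:ℝ) - 1) * γ * h * (q - p) + (1 - α) * β * τ * rp * ((N:ℝ) - 1) * ↑N) / ↑N := by
      field_simp
    rw [hE]
    apply div_pos _ hNpos
    ring_nf at hF ⊢; linarith
  -- IVT
  have hcont : ContinuousOn Q (Set.Icc 0 1) := by
    have hS1 : Continuous fun x : ℝ => ∑ k ∈ Finset.range (N - 1), (1 - x) ^ (k + 1) :=
      continuous_finset_sum _ fun k _ => (continuous_const.sub continuous_id).pow _
    have hS2 : Continuous fun x : ℝ => ∑ k ∈ Finset.range (N - 1), x ^ (k + 1) :=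
      continuous_finset_sum _ fun k _ => continuous_id.pow _
    have : Continuous fun x : ℝ => Qbar N c τ β rp α F h γ p q x := by
      simp only [Qbar]
      exact (continuous_const.sub (continuous_const.mul hS1)).add
        (continuous_const.mul hS2)
    exact this.continuousOn
  have hsub := intermediate_value_Ioo (by norm_num : (0:ℝ) ≤ 1) hcont
  obtain ⟨xs, hxs, hQxs⟩ := hsub ⟨hQ0, hQ1⟩
  refine ⟨xs, hxs.1, hxs.2, hQxs, ?_, ?_, ?_⟩
  · intro y hy0 hy1 hQy
    exact hmono.injOn (Set.mem_Icc.2 ⟨hy0.le, hy1.le⟩)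
      (Set.mem_Icc.2 ⟨hxs.1.le, hxs.2.le⟩) (hQy.trans hQxs.symm)
  · intro x hx0 hxlt
    have := hmono (Set.mem_Icc.2 ⟨hx0.le, (hxlt.trans hxs.2).le⟩)
      (Set.mem_Icc.2 ⟨hxs.1.le, hxs.2.le⟩) hxlt
    linarith [hQxs ▸ this]
  · intro x hxgt hx1
    have := hmono (Set.mem_Icc.2 ⟨hxs.1.le, hxs.2.le⟩)
      (Set.mem_Icc.2 ⟨(hxs.1.trans hxgt).le, hx1.le⟩) hxgt
    linarith [hQxs ▸ this]
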